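/- There is no probability space carrying random variables A₁, A₂, B₁, B₂, each taking values in {0,1} almost surely, such that E[A₁] = E[A₂] = E[B₁] = E[B₂] = 1/2, E[A₁B₁] = E[A₂B₁] = E[A₁B₂] = 1/4 + √2/8, and E[A₂B₂] = 1/4 − √2/8. -/

import Mathlib

open MeasureTheory

lemma intg01 {Ω : Type} [MeasurableSpace Ω] (μ : Measure Ω) [IsProbabilityMeasure μ]
    {f : Ω → ℝ} (hm : Measurable f) (h01 : ∀ᵐ ω ∂μ, f ω = 0 ∨ f ω = 1) :
    Integrable f μ := by
  refine ⟨hm.aestronglyMeasurable, ?_⟩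
  apply HasFiniteIntegral.of_bounded (C := (1 : ℝ))
  filter_upwards [h01] with ω h
  rcases h with h | h <;> simp [h]

theorem stmt_7 :
    ¬ ∃ (Ω : Type) (_ : MeasurableSpace Ω) (μ : Measure Ω) (A₁ A₂ B₁ B₂ : Ω → ℝ),
      IsProbabilityMeasure μ ∧
      Measurable A₁ ∧ Measurable A₂ ∧ Measurable B₁ ∧ Measurable B₂ ∧
      (∀ᵐ ω ∂μ, A₁ ω = 0 ∨ A₁ ω = 1) ∧ (∀ᵐ ω ∂μ, A₂ ω = 0 ∨ A₂ ω = 1) ∧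
      (∀ᵐ ω ∂μ, B₁ ω = 0 ∨ B₁ ω = 1) ∧ (∀ᵐ ω ∂μ, B₂ ω = 0 ∨ B₂ ω = 1) ∧
      (∫ ω, A₁ ω ∂μ = 1 / 2) ∧ (∫ ω, A₂ ω ∂μ = 1 / 2) ∧
      (∫ ω, B₁ ω ∂μ = 1 / 2) ∧ (∫ ω, B₂ ω ∂μ = 1 / 2) ∧
      (∫ ω, A₁ ω * B₁ ω ∂μ = 1 / 4 + Real.sqrt 2 / 8) ∧
      (∫ ω, A₂ ω * B₁ ω ∂μ = 1 / 4 + Real.sqrt 2 / 8) ∧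
      (∫ ω, A₁ ω * B₂ ω ∂μ = 1 / 4 + Real.sqrt 2 / 8) ∧
      (∫ ω, A₂ ω * B₂ ω ∂μ = 1 / 4 - Real.sqrt 2 / 8) := by
  rintro ⟨Ω, m, μ, A₁, A₂, B₁, B₂, hp, mA₁, mA₂, mB₁, mB₂, hA₁, hA₂, hB₁, hB₂,
    eA₁, eA₂, eB₁, eB₂, e11, e21, e12, e22⟩
  haveI := hp
  have p11 : ∀ᵐ ω ∂μ, A₁ ω * B₁ ω = 0 ∨ A₁ ω * B₁ ω = 1 := by
    filter_upwards [hA₁, hB₁] with ω h1 h2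
    rcases h1 with h1 | h1 <;> rcases h2 with h2 | h2 <;> simp [h1, h2]
  have p21 : ∀ᵐ ω ∂μ, A₂ ω * B₁ ω = 0 ∨ A₂ ω * B₁ ω = 1 := by
    filter_upwards [hA₂, hB₁] with ω h1 h2
    rcases h1 with h1 | h1 <;> rcases h2 with h2 | h2 <;> simp [h1, h2]
  have p12 : ∀ᵐ ω ∂μ, A₁ ω * B₂ ω = 0 ∨ A₁ ω * B₂ ω = 1 := by
    filter_upwards [hA₁, hB₂] with ω h1 h2
    rcases h1 with h1 | h1 <;> rcases h2 with h2 | h2 <;> simp [h1, h2]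
  have p22 : ∀ᵐ ω ∂μ, A₂ ω * B₂ ω = 0 ∨ A₂ ω * B₂ ω = 1 := by
    filter_upwards [hA₂, hB₂] with ω h1 h2
    rcases h1 with h1 | h1 <;> rcases h2 with h2 | h2 <;> simp [h1, h2]
  have i11 : Integrable (fun ω => A₁ ω * B₁ ω) μ := intg01 μ (mA₁.mul mB₁) p11
  have i21 : Integrable (fun ω => A₂ ω * B₁ ω) μ := intg01 μ (mA₂.mul mB₁) p21
  have i12 : Integrable (fun ω => A₁ ω * B₂ ω) μ := intg01 μ (mA₁.mul mB₂) p12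
  have i22 : Integrable (fun ω => A₂ ω * B₂ ω) μ := intg01 μ (mA₂.mul mB₂) p22
  have iA₁ := intg01 μ mA₁ hA₁
  have iB₁ := intg01 μ mB₁ hB₁
  have key : (∫ ω, A₁ ω * B₁ ω ∂μ) + (∫ ω, A₂ ω * B₁ ω ∂μ) + (∫ ω, A₁ ω * B₂ ω ∂μ) ≤
      (∫ ω, A₂ ω * B₂ ω ∂μ) + (∫ ω, A₁ ω ∂μ) + (∫ ω, B₁ ω ∂μ) := by
    have isum1 : Integrable (fun ω => A₁ ω * B₁ ω + A₂ ω * B₁ ω) μ := i11.add i21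
    have isum2 : Integrable (fun ω => A₂ ω * B₂ ω + A₁ ω) μ := i22.add iA₁
    rw [← integral_add i11 i21, ← integral_add isum1 i12,
      ← integral_add i22 iA₁, ← integral_add isum2 iB₁]
    apply integral_mono_ae (isum1.add i12) (isum2.add iB₁)
    filter_upwards [hA₁, hA₂, hB₁, hB₂] with ω h1 h2 h3 h4
    rcases h1 with h1 | h1 <;> rcases h2 with h2 | h2 <;> rcases h3 with h3 | h3 <;>
      rcases h4 with h4 | h4 <;> simp [Pi.add_apply, h1, h2, h3, h4]
  rw [e11, e21, e12, e22, eA₁, eB₁] at key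
  have h2 : (1 : ℝ) < Real.sqrt 2 := by
    nlinarith [Real.sq_sqrt (by norm_num : (0:ℝ) ≤ 2), Real.sqrt_nonneg 2]
  linarith
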